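/- Let h ≥ 2 and s ≥ 1, set d := k + s − 1 and m := s + h − 1, assume h + d ≤ n, and let λ : {1,…,n} × {0,…,s−1} → F be injective. Let 𝓕, 𝓡 ⊆ {1,…,n} be disjoint sets with |𝓕| = h and |𝓡| = d. Then there exist: first-round download functions φ_{u,j} : N → M for each u ∈ 𝓕 and j ∈ 𝓡; exchange functions ψ_{u,v} : (𝓡 → M) → M for each ordered pair of distinct u, v ∈ 𝓕; and recovery functions ρ_u : (𝓡 → M) × ((𝓕∖{u}) → M) → N for each u ∈ 𝓕; such that for every codeword c of C(n,k,s,m,λ) and every u ∈ 𝓕, ρ_u( (j ↦ φ_{u,j}(c_j)), (v ↦ ψ_{v,u}(j ↦ φ_{v,j}(c_j))) ) = c_u, where c_i ∈ N denotes the i-th node (b,a) ↦ c(i,b,a). Since each of the h·d first-round messages and each of the h(h−1) exchange messages consists of s^n symbols of F, the total repair bandwidth is h(d+h−1)·s^n symbols, which meets the cooperative cut-set bound |𝓕|(|𝓡|+|𝓕|−1)·l / (|𝓕|+|𝓡|−k) with equality for node size l = (d+h−k)·s^n. -/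

import Mathlib

/-- The code `C(n,k,s,m,λ)`: an array `c : {1,…,n} × {1,…,m} × {0,…,s-1}^n → F`
(node index `i : Fin n`, block index `b ∈ {1,…,m}` as a natural number,
`a : Fin n → Fin s`) satisfying the parity-check equations
`∑_{i=1}^n λ(i,a_i)^t · c(i,b,a) = 0` for all `t ∈ {0,…,n-k-1}`,
`b ∈ {1,…,m}` and `a ∈ {0,…,s-1}^n`. -/
def IsCodeword {F : Type*} [Field F] {n : ℕ} (k s m : ℕ)
    (lam : Fin n → Fin s → F) (c : Fin n → ℕ → (Fin n → Fin s) → F) : Prop :=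
  ∀ t < n - k, ∀ b ∈ Finset.Icc 1 m, ∀ a : Fin n → Fin s,
    ∑ i, lam i (a i) ^ t * c i b a = 0

namespace Stmt13

open Finset

variable {F : Type*} [Field F] {n s : ℕ}

/-- Index of the base point used for column `x` in layer `r` (for `x ≠ r`). -/
def rhoNat (r x : ℕ) : ℕ := if r < x then r else r - 1

/-- The layer whose base point at column `x` is `i` (for `i < s - 1`). -/
def rOf (i : ℕ) (x : Fin s) : Fin s :=
  if h : i + 1 < s then (if i < (x : ℕ) then ⟨i, by omega⟩ else ⟨i + 1, h⟩) else x

lemma rho_lt (r x : Fin s) (hx : x ≠ r) : rhoNat (r : ℕ) (x : ℕ) < s - 1 := by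
  have hxr : (x : ℕ) ≠ (r : ℕ) := fun hv => hx (Fin.ext hv)
  have h1 := x.isLt
  have h2 := r.isLt
  unfold rhoNat
  split <;> omega

lemma rOf_spec (i : ℕ) (hi : i < s - 1) (y : Fin s) :
    rOf (s := s) i y ≠ y ∧ rhoNat ((rOf (s := s) i y) : ℕ) (y : ℕ) = i := by
  have hy := y.isLt
  unfold rOf
  rw [dif_pos (by omega : i + 1 < s)]
  by_cases hc : i < (y : ℕ)
  · rw [if_pos hc]
    constructor
    · intro hEq
      have : i = (y : ℕ) := congrArg Fin.val hEq
      omega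
    · unfold rhoNat
      simp only
      rw [if_pos hc]
  · rw [if_neg hc]
    constructor
    · intro hEq
      have : i + 1 = (y : ℕ) := congrArg Fin.val hEq
      omega
    · unfold rhoNat
      simp only
      rw [if_neg (by omega)]
      omega

/-- Evaluation at `θ` of the polynomial whose coefficients are the blocks of a node. -/
def nodePoly (m : ℕ) (cj : ℕ → (Fin n → Fin s) → F) (a : Fin n → Fin s) (θ : F) : F :=
  ∑ b ∈ Finset.Icc 1 m, cj b a * θ ^ (b - 1)

/-- The first–round message computed from node data `cj` for repair of node `w`
with evaluation-point family `μw`. -/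
def EMsg (w : Fin n) (μw : Fin s → Fin s → F) (m : ℕ) (cj : ℕ → (Fin n → Fin s) → F) :
    (Fin n → Fin s) → F :=
  fun a => ∑ x : Fin s, nodePoly m cj (Function.update a w x) (μw (a w) x)

/-- The interpolation points of the linear system used by node `w`. -/
def sysPts (lam : Fin n → Fin s → F) (Rs : Finset (Fin n)) (w : Fin n) (a : Fin n → Fin s) :
    (Fin s ⊕ {i : Fin n // i ∈ (Finset.univ \ Rs).erase w}) → F :=
  Sum.elim (fun x => lam w x) (fun i => lam i.1 (a i.1))

/-- The linear system (a power-sum / Vandermonde system). -/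
def sysMap (lam : Fin n → Fin s → F) (Rs : Finset (Fin n)) (w : Fin n) (N : ℕ)
    (a : Fin n → Fin s) :
    ((Fin s ⊕ {i : Fin n // i ∈ (Finset.univ \ Rs).erase w}) → F) → (Fin N → F) :=
  fun U t => ∑ p, sysPts lam Rs w a p ^ (t : ℕ) * U p

/-- Right-hand side of the system, computed from the downloaded messages. -/
def rhsVec (lam : Fin n → Fin s → F) (Rs : Finset (Fin n)) (N : ℕ)
    (D : {j // j ∈ Rs} → (Fin n → Fin s) → F) (a : Fin n → Fin s) : Fin N → F :=
  fun t => -∑ j : {j // j ∈ Rs}, lam j.1 (a j.1) ^ (t : ℕ) * D j a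

/-- Solving the system (noncomputably). -/
noncomputable def solveAt (lam : Fin n → Fin s → F) (Rs : Finset (Fin n)) (w : Fin n) (N : ℕ)
    (D : {j // j ∈ Rs} → (Fin n → Fin s) → F) (a : Fin n → Fin s) :
    (Fin s ⊕ {i : Fin n // i ∈ (Finset.univ \ Rs).erase w}) → F :=
  Function.invFun (sysMap lam Rs w N a) (rhsVec lam Rs N D a)

/-- The true values of the unknowns of the system. -/
def trueU (m : ℕ) (c : Fin n → ℕ → (Fin n → Fin s) → F) (μw : Fin s → Fin s → F)
    (Rs : Finset (Fin n)) (w : Fin n) (a : Fin n → Fin s) :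
    (Fin s ⊕ {i : Fin n // i ∈ (Finset.univ \ Rs).erase w}) → F :=
  Sum.elim (fun x => nodePoly m (c w) (Function.update a w x) (μw (a w) x))
    (fun i => ∑ x : Fin s, nodePoly m (c i.1) (Function.update a w x) (μw (a w) x))

/-- Recovered evaluation of the node polynomial of `u` at base point `i`. -/
noncomputable def Beval (lam : Fin n → Fin s → F) (Rs : Finset (Fin n)) (u : Fin n) (N : ℕ)
    (D : {j // j ∈ Rs} → (Fin n → Fin s) → F) (i : ℕ) (a' : Fin n → Fin s) : F :=
  solveAt lam Rs u N D (Function.update a' u (rOf i (a' u))) (Sum.inl (a' u))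

/-- Correction term subtracted from the exchanged message of partner `w`. -/
noncomputable def corrOf (lam : Fin n → Fin s → F) (Rs : Finset (Fin n)) (u : Fin n) (N : ℕ)
    (D : {j // j ∈ Rs} → (Fin n → Fin s) → F) (w : Fin n) (a : Fin n → Fin s) : F :=
  ∑ x ∈ Finset.univ.erase (a w),
    Beval lam Rs u N D (rhoNat ((a w : ℕ)) (x : ℕ)) (Function.update a w x)

/-- The full vector of recovered evaluations of the node polynomial of `u` at `a`. -/
noncomputable def valsOf (lam : Fin n → Fin s → F) (Rs Fs : Finset (Fin n)) (u : Fin n) (N : ℕ)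
    (D : {j // j ∈ Rs} → (Fin n → Fin s) → F)
    (X : {v // v ∈ Fs.erase u} → (Fin n → Fin s) → F) (a : Fin n → Fin s) :
    (Fin (s - 1) ⊕ {w : Fin n // w ∈ Fs}) → F :=
  Sum.elim (fun i => Beval lam Rs u N D i.1 a)
    (fun w => if hw : w.1 = u then solveAt lam Rs u N D a (Sum.inl (a u))
      else X ⟨w.1, Finset.mem_erase.2 ⟨hw, w.2⟩⟩ a - corrOf lam Rs u N D w.1 a)

/-- The interpolation points used for final recovery. -/
def ptOf (pt : ℕ → F) (tI : Fin n → ℕ) (Fs : Finset (Fin n)) (a : Fin n → Fin s) :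
    (Fin (s - 1) ⊕ {w : Fin n // w ∈ Fs}) → F :=
  Sum.elim (fun i => pt i.1) (fun w => pt (s - 1 + tI w.1 * s + (a w.1 : ℕ)))

/-- A power-sum (transposed Vandermonde) map at distinct points is injective. -/
lemma powsum_inj {ι : Type*} [Fintype ι] [DecidableEq ι] (z : ι → F)
    (hz : Function.Injective z) {N : ℕ} (hN : Fintype.card ι ≤ N) :
    Function.Injective fun (U : ι → F) (t : Fin N) => ∑ i, z i ^ (t : ℕ) * U i := by
  intro U1 U2 hEq
  have key : ∀ t < N, ∑ i, z i ^ t * (U1 i - U2 i) = 0 := by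
    intro t ht
    have h0 := congrFun hEq ⟨t, ht⟩
    simp only at h0
    have h2 : ∑ i, (z i ^ t * U1 i - z i ^ t * U2 i) = 0 := by
      rw [Finset.sum_sub_distrib, h0, sub_self]
    calc ∑ i, z i ^ t * (U1 i - U2 i)
        = ∑ i, (z i ^ t * U1 i - z i ^ t * U2 i) :=
          Finset.sum_congr rfl fun i _ => by ring
      _ = 0 := h2
  funext i0
  have hinjOn : Set.InjOn z ↑(Finset.univ : Finset ι) := fun p _ q _ hpq => hz hpq
  have hcard : 0 < Fintype.card ι := Fintype.card_pos_iff.mpr ⟨i0⟩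
  set p := Lagrange.basis Finset.univ z i0 with hp
  have hdeg : p.natDegree = Fintype.card ι - 1 := by
    rw [hp, Lagrange.natDegree_basis hinjOn (Finset.mem_univ _), Finset.card_univ]
  have h1 : ∑ i, p.eval (z i) * (U1 i - U2 i) = U1 i0 - U2 i0 := by
    rw [Finset.sum_eq_single i0]
    · rw [hp, Lagrange.eval_basis_self hinjOn (Finset.mem_univ _), one_mul]
    · intro j _ hj
      rw [hp, Lagrange.eval_basis_of_ne (Ne.symm hj) (Finset.mem_univ _), zero_mul]
    · intro hmem; exact absurd (Finset.mem_univ i0) hmem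
  have h2 : ∑ i, p.eval (z i) * (U1 i - U2 i) = 0 := by
    calc ∑ i, p.eval (z i) * (U1 i - U2 i)
        = ∑ i, (∑ t ∈ Finset.range (p.natDegree + 1), p.coeff t * z i ^ t) * (U1 i - U2 i) :=
          Finset.sum_congr rfl fun i _ => by rw [Polynomial.eval_eq_sum_range]
      _ = ∑ i, ∑ t ∈ Finset.range (p.natDegree + 1), p.coeff t * (z i ^ t * (U1 i - U2 i)) := by
          refine Finset.sum_congr rfl fun i _ => ?_
          rw [Finset.sum_mul]
          exact Finset.sum_congr rfl fun t _ => by ring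
      _ = ∑ t ∈ Finset.range (p.natDegree + 1), p.coeff t * ∑ i, z i ^ t * (U1 i - U2 i) := by
          rw [Finset.sum_comm]
          exact Finset.sum_congr rfl fun t _ => by rw [Finset.mul_sum]
      _ = 0 := by
          refine Finset.sum_eq_zero fun t ht => ?_
          have htr := Finset.mem_range.1 ht
          rw [key t (by omega), mul_zero]
  have := (h1.symm.trans h2)
  exact sub_eq_zero.mp this

/-- Evaluation of polynomials of degree `< N` at at least `N` distinct points is injective. -/
lemma evalmap_inj {ι : Type*} [Fintype ι] (z : ι → F) (hz : Function.Injective z)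
    {N : ℕ} (hN : N ≤ Fintype.card ι) :
    Function.Injective fun (co : Fin N → F) (p : ι) => ∑ b : Fin N, z p ^ (b : ℕ) * co b := by
  intro c1 c2 hEq
  rcases Nat.eq_zero_or_pos N with hN0 | hNpos
  · subst hN0; funext b; exact absurd b.isLt (by omega)
  classical
  set q : Polynomial F := ∑ b : Fin N, Polynomial.C (c1 b - c2 b) * Polynomial.X ^ (b : ℕ)
    with hq
  have heval : ∀ i, q.eval (z i) = 0 := by
    intro i
    have h0 := congrFun hEq i
    simp only at h0
    rw [hq, Polynomial.eval_finset_sum]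
    have : ∀ b : Fin N,
        (Polynomial.C (c1 b - c2 b) * Polynomial.X ^ (b : ℕ)).eval (z i)
          = z i ^ (b : ℕ) * c1 b - z i ^ (b : ℕ) * c2 b := by
      intro b
      simp [Polynomial.eval_mul, Polynomial.eval_pow]
      ring
    rw [Finset.sum_congr rfl fun b _ => this b, Finset.sum_sub_distrib, h0, sub_self]
  have hdeg : q.natDegree < N := by
    have : q.natDegree ≤ N - 1 := by
      rw [hq]
      refine Polynomial.natDegree_sum_le_of_forall_le _ _ fun b _ => ?_
      refine le_trans (Polynomial.natDegree_C_mul_X_pow_le _ _) ?_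
      have := b.isLt; omega
    omega
  have hq0 : q = 0 :=
    Polynomial.eq_zero_of_natDegree_lt_card_of_eval_eq_zero q hz heval (by omega)
  funext b
  have hco : q.coeff (b : ℕ) = c1 b - c2 b := by
    rw [hq, Polynomial.finset_sum_coeff]
    rw [Finset.sum_eq_single b]
    · simp [sub_mul, Polynomial.coeff_sub, Polynomial.coeff_C_mul, Polynomial.coeff_X_pow]
    · intro b' _ hb'
      have hne : ((b : ℕ) : ℕ) ≠ (b' : ℕ) := by
        intro hv; exact hb' (Fin.ext hv.symm)
      simp [sub_mul, Polynomial.coeff_sub, Polynomial.coeff_C_mul, Polynomial.coeff_X_pow,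
        if_neg hne]
    · intro hmem; exact absurd (Finset.mem_univ b) hmem
  rw [hq0] at hco
  simp only [Polynomial.coeff_zero] at hco
  exact sub_eq_zero.mp hco.symm


/-- Correctness of the system solve: downloading the messages `EMsg w μw` from all the
helpers determines the true unknown vector `trueU`. -/
lemma solve_correct {n k h s : ℕ} [NeZero s] {F : Type*} [Field F]
    (hk : 1 ≤ k) (hh : 2 ≤ h) (hn : h + (k + s - 1) ≤ n)
    (lam : Fin n → Fin s → F)
    (hlam : Function.Injective fun p : Fin n × Fin s => lam p.1 p.2)
    (Rs : Finset (Fin n)) (hRcard : Rs.card = k + s - 1)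
    (c : Fin n → ℕ → (Fin n → Fin s) → F) (hcode : IsCodeword k s (s + h - 1) lam c)
    (w : Fin n) (hw : w ∉ Rs) (μw : Fin s → Fin s → F) (a : Fin n → Fin s) :
    solveAt lam Rs w (n - k) (fun j => EMsg w μw (s + h - 1) (c j.1)) a
      = trueU (s + h - 1) c μw Rs w a := by
  classical
  have hs : 1 ≤ s := Nat.pos_of_ne_zero (NeZero.ne s)
  have pairInj : ∀ {i : Fin n} {x : Fin s} {i' : Fin n} {x' : Fin s},
      lam i x = lam i' x' → i = i' ∧ x = x' := by
    intro i x i' x' he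
    have := hlam (a₁ := (i, x)) (a₂ := (i', x')) he
    exact ⟨congrArg Prod.fst this, congrArg Prod.snd this⟩
  have hzinj : Function.Injective (sysPts lam Rs w a) := by
    intro p q hpq
    cases p with
    | inl x =>
      cases q with
      | inl x' => exact congrArg Sum.inl (pairInj hpq).2
      | inr i' => exact absurd (pairInj hpq).1.symm (Finset.mem_erase.1 i'.2).1
    | inr i =>
      cases q with
      | inl x' => exact absurd (pairInj hpq).1 (Finset.mem_erase.1 i.2).1
      | inr i' => exact congrArg Sum.inr (Subtype.ext (pairInj hpq).1)
  have hinj : Function.Injective (sysMap lam Rs w (n - k) a) := by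
    refine powsum_inj (sysPts lam Rs w a) hzinj ?_
    rw [Fintype.card_sum, Fintype.card_fin, Fintype.card_coe,
      Finset.card_erase_of_mem (Finset.mem_sdiff.2 ⟨Finset.mem_univ _, hw⟩),
      Finset.card_sdiff_of_subset (Finset.subset_univ Rs), Finset.card_univ, Fintype.card_fin, hRcard]
    omega
  have hsplit : ∀ g : Fin n → F,
      g w + ((∑ i ∈ (Finset.univ \ Rs).erase w, g i) + ∑ j ∈ Rs, g j) = ∑ i : Fin n, g i := by
    intro g
    rw [← Finset.sum_sdiff (Finset.subset_univ Rs),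
      ← Finset.add_sum_erase _ g (Finset.mem_sdiff.2 ⟨Finset.mem_univ _, hw⟩), add_assoc]
  have hrhs : sysMap lam Rs w (n - k) a (trueU (s + h - 1) c μw Rs w a)
      = rhsVec lam Rs (n - k) (fun j => EMsg w μw (s + h - 1) (c j.1)) a := by
    funext t
    have hpar : ∀ x : Fin s,
        ∑ i : Fin n, lam i (Function.update a w x i) ^ (t : ℕ)
            * nodePoly (s + h - 1) (c i) (Function.update a w x) (μw (a w) x) = 0 := by
      intro x
      have h0 : ∀ b ∈ Finset.Icc 1 (s + h - 1),
          ∑ i, lam i (Function.update a w x i) ^ (t : ℕ) * c i b (Function.update a w x) = 0 :=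
        fun b hb => hcode (t : ℕ) t.isLt b hb _
      simp_rw [nodePoly, Finset.mul_sum]
      rw [Finset.sum_comm]
      refine Finset.sum_eq_zero fun b hb => ?_
      calc ∑ i, lam i (Function.update a w x i) ^ (t : ℕ)
            * (c i b (Function.update a w x) * μw (a w) x ^ (b - 1))
          = (∑ i, lam i (Function.update a w x i) ^ (t : ℕ) * c i b (Function.update a w x))
              * μw (a w) x ^ (b - 1) := by
            rw [Finset.sum_mul]; exact Finset.sum_congr rfl fun i _ => by ring
        _ = 0 := by rw [h0 b hb, zero_mul]
    have key : ∀ x : Fin s,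
        lam w x ^ (t : ℕ) * nodePoly (s + h - 1) (c w) (Function.update a w x) (μw (a w) x)
          + ((∑ i ∈ (Finset.univ \ Rs).erase w, lam i (a i) ^ (t : ℕ)
                * nodePoly (s + h - 1) (c i) (Function.update a w x) (μw (a w) x))
            + ∑ j ∈ Rs, lam j (a j) ^ (t : ℕ)
                * nodePoly (s + h - 1) (c j) (Function.update a w x) (μw (a w) x)) = 0 := by
      intro x
      have h1 := hpar x
      rw [← hsplit (fun i => lam i (Function.update a w x i) ^ (t : ℕ)
        * nodePoly (s + h - 1) (c i) (Function.update a w x) (μw (a w) x))] at h1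
      simp only [Function.update_self] at h1
      have e2 : ∑ i ∈ (Finset.univ \ Rs).erase w, lam i (Function.update a w x i) ^ (t : ℕ)
            * nodePoly (s + h - 1) (c i) (Function.update a w x) (μw (a w) x)
          = ∑ i ∈ (Finset.univ \ Rs).erase w, lam i (a i) ^ (t : ℕ)
            * nodePoly (s + h - 1) (c i) (Function.update a w x) (μw (a w) x) :=
        Finset.sum_congr rfl fun i hi => by
          rw [Function.update_of_ne (Finset.mem_erase.1 hi).1]
      have e3 : ∑ j ∈ Rs, lam j (Function.update a w x j) ^ (t : ℕ)
            * nodePoly (s + h - 1) (c j) (Function.update a w x) (μw (a w) x)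
          = ∑ j ∈ Rs, lam j (a j) ^ (t : ℕ)
            * nodePoly (s + h - 1) (c j) (Function.update a w x) (μw (a w) x) :=
        Finset.sum_congr rfl fun j hj => by
          rw [Function.update_of_ne (by rintro rfl; exact hw hj)]
      rw [e2, e3] at h1
      exact h1
    show ∑ p, sysPts lam Rs w a p ^ (t : ℕ) * trueU (s + h - 1) c μw Rs w a p
        = -∑ j : {j // j ∈ Rs}, lam j.1 (a j.1) ^ (t : ℕ) * EMsg w μw (s + h - 1) (c j.1) a
    rw [Fintype.sum_sum_type]
    simp only [sysPts, trueU, Sum.elim_inl, Sum.elim_inr, EMsg]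
    have hB : (∑ i : {i : Fin n // i ∈ (Finset.univ \ Rs).erase w},
          lam i.1 (a i.1) ^ (t : ℕ) * ∑ x : Fin s,
            nodePoly (s + h - 1) (c i.1) (Function.update a w x) (μw (a w) x))
        = ∑ x : Fin s, ∑ i ∈ (Finset.univ \ Rs).erase w, lam i (a i) ^ (t : ℕ)
            * nodePoly (s + h - 1) (c i) (Function.update a w x) (μw (a w) x) := by
      rw [Finset.sum_coe_sort ((Finset.univ \ Rs).erase w)
        (fun i => lam i (a i) ^ (t : ℕ) * ∑ x : Fin s,
          nodePoly (s + h - 1) (c i) (Function.update a w x) (μw (a w) x))]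
      simp_rw [Finset.mul_sum]
      rw [Finset.sum_comm]
    have hC : (∑ j : {j // j ∈ Rs}, lam j.1 (a j.1) ^ (t : ℕ) * ∑ x : Fin s,
          nodePoly (s + h - 1) (c j.1) (Function.update a w x) (μw (a w) x))
        = ∑ x : Fin s, ∑ j ∈ Rs, lam j (a j) ^ (t : ℕ)
            * nodePoly (s + h - 1) (c j) (Function.update a w x) (μw (a w) x) := by
      rw [Finset.sum_coe_sort Rs
        (fun j => lam j (a j) ^ (t : ℕ) * ∑ x : Fin s,
          nodePoly (s + h - 1) (c j) (Function.update a w x) (μw (a w) x))]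
      simp_rw [Finset.mul_sum]
      rw [Finset.sum_comm]
    rw [hB, hC]
    rw [← Finset.sum_add_distrib, ← Finset.sum_neg_distrib]
    refine Finset.sum_congr rfl fun x _ => ?_
    linear_combination key x
  rw [solveAt, ← hrhs]
  exact Function.leftInverse_invFun hinj _

end Stmt13

open Stmt13

theorem stmt_13 {F : Type*} [Field F] (n k h s : ℕ) [NeZero s]
    (hk : 1 ≤ k) (hh : 2 ≤ h) (hn : h + (k + s - 1) ≤ n)
    (lam : Fin n → Fin s → F)
    (hlam : Function.Injective fun p : Fin n × Fin s => lam p.1 p.2)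
    (Fs Rs : Finset (Fin n)) (hdisj : Disjoint Fs Rs)
    (hFcard : Fs.card = h) (hRcard : Rs.card = k + s - 1) :
    ∃ (φ : Fin n → Fin n → (ℕ → (Fin n → Fin s) → F) → ((Fin n → Fin s) → F))
      (ψ : Fin n → Fin n → ({j // j ∈ Rs} → (Fin n → Fin s) → F) → ((Fin n → Fin s) → F))
      (ρ : (u : Fin n) → ({j // j ∈ Rs} → (Fin n → Fin s) → F) →
            ({v // v ∈ Fs.erase u} → (Fin n → Fin s) → F) → (ℕ → (Fin n → Fin s) → F)),
      ∀ c : Fin n → ℕ → (Fin n → Fin s) → F, IsCodeword k s (s + h - 1) lam c →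
        ∀ u ∈ Fs, ∀ b ∈ Finset.Icc 1 (s + h - 1), ∀ a : Fin n → Fin s,
          ρ u (fun j => φ u j.1 (c j.1))
              (fun v => ψ v.1 u (fun j => φ v.1 j.1 (c j.1))) b a
            = c u b a := by
  classical
  have hs : 1 ≤ s := Nat.pos_of_ne_zero (NeZero.ne s)
  -- a family of globally distinct points in `F`
  have hle : s - 1 + h * s ≤ n * s := by
    have h1 : h + s ≤ n := by omega
    have h2 : (h + s) * s ≤ n * s := Nat.mul_le_mul_right s h1
    have h3 : s ≤ s * s := Nat.le_mul_of_pos_left s (by omega)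
    calc s - 1 + h * s ≤ h * s + s := by omega
      _ ≤ h * s + s * s := by omega
      _ = (h + s) * s := by ring
      _ ≤ n * s := h2
  obtain ⟨pt, hpt⟩ : ∃ pt : ℕ → F, ∀ i j, i < s - 1 + h * s → j < s - 1 + h * s →
      pt i = pt j → i = j := by
    refine ⟨fun i => if hi : i < s - 1 + h * s then
      (fun q : Fin n × Fin s => lam q.1 q.2)
        (finProdFinEquiv.symm (Fin.castLE hle ⟨i, hi⟩)) else 0, ?_⟩
    intro i j hi hj hij
    simp only at hij
    rw [dif_pos hi, dif_pos hj] at hij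
    have h1 := hlam hij
    have h2 := finProdFinEquiv.symm.injective h1
    have h3 := congrArg Fin.val h2
    simpa using h3
  obtain ⟨tI, htIlt, htIinj⟩ : ∃ tI : Fin n → ℕ, (∀ w ∈ Fs, tI w < h) ∧
      (∀ w ∈ Fs, ∀ w' ∈ Fs, tI w = tI w' → w = w') := by
    refine ⟨fun w => if hw : w ∈ Fs then
      ((Fs.orderIsoOfFin hFcard).symm ⟨w, hw⟩ : Fin h).1 else 0, ?_, ?_⟩
    · intro w hw; simp only; rw [dif_pos hw]
      exact ((Fs.orderIsoOfFin hFcard).symm ⟨w, hw⟩).isLt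
    · intro w hw w' hw' he
      simp only at he
      rw [dif_pos hw, dif_pos hw'] at he
      have h4 := (Fs.orderIsoOfFin hFcard).symm.injective (Fin.ext he)
      exact congrArg Subtype.val h4
  -- the evaluation-point families
  set μf : Fin n → Fin s → Fin s → F := fun w r x =>
    if x = r then pt (s - 1 + tI w * s + (r : ℕ)) else pt (rhoNat (r : ℕ) (x : ℕ)) with hμf
  have hμself : ∀ w (y : Fin s), μf w y y = pt (s - 1 + tI w * s + (y : ℕ)) := by
    intro w y; rw [hμf]; simp
  have hμoff : ∀ w (r x : Fin s), x ≠ r → μf w r x = pt (rhoNat (r : ℕ) (x : ℕ)) := by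
    intro w r x hx; rw [hμf]; simp [hx]
  refine ⟨fun w _j cj => EMsg w (μf w) (s + h - 1) cj,
    fun w v D a => if hx : v ∈ (Finset.univ \ Rs).erase w then
        solveAt lam Rs w (n - k) D a (Sum.inr ⟨v, hx⟩) else 0,
    fun u D X b a => if hb : b ∈ Finset.Icc 1 (s + h - 1) then
        Function.invFun
          (fun (co : Fin (s + h - 1) → F) (p : Fin (s - 1) ⊕ {w : Fin n // w ∈ Fs}) =>
            ∑ b' : Fin (s + h - 1), ptOf pt tI Fs a p ^ (b' : ℕ) * co b')
          (valsOf lam Rs Fs u (n - k) D X a)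
          ⟨b - 1, by have := Finset.mem_Icc.1 hb; omega⟩
      else 0, ?_⟩
  intro c hcode u hu b hb a
  have hbm := Finset.mem_Icc.1 hb
  have hUnotR : u ∉ Rs := Finset.disjoint_left.1 hdisj hu
  have hDw : ∀ w, w ∉ Rs → ∀ a' : Fin n → Fin s,
      solveAt lam Rs w (n - k) (fun j => EMsg w (μf w) (s + h - 1) (c j.1)) a'
        = trueU (s + h - 1) c (μf w) Rs w a' :=
    fun w hw a' => solve_correct hk hh hn lam hlam Rs hRcard c hcode w hw (μf w) a'
  -- recovered base-point evaluations
  have hBeval : ∀ (i : ℕ), i < s - 1 → ∀ a' : Fin n → Fin s,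
      Beval lam Rs u (n - k) (fun j => EMsg u (μf u) (s + h - 1) (c j.1)) i a'
        = nodePoly (s + h - 1) (c u) a' (pt i) := by
    intro i hi a'
    obtain ⟨hne, hrho⟩ := rOf_spec i hi (a' u)
    rw [Beval, hDw u hUnotR]
    show trueU _ c (μf u) Rs u _ (Sum.inl (a' u)) = _
    rw [trueU]
    simp only [Sum.elim_inl]
    rw [Function.update_self, Function.update_idem, Function.update_eq_self]
    rw [hμoff u _ _ (Ne.symm hne), hrho]
  -- reindexing between `Fin (s+h-1)` sums and `nodePoly`
  have hreindex : ∀ (a' : Fin n → Fin s) (θ : F),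
      (∑ b' : Fin (s + h - 1), θ ^ (b' : ℕ) * c u ((b' : ℕ) + 1) a')
        = nodePoly (s + h - 1) (c u) a' θ := by
    intro a' θ
    rw [nodePoly, Fin.sum_univ_eq_sum_range (fun i => θ ^ i * c u (i + 1) a')]
    refine Finset.sum_bij' (i := fun b' _ => b' + 1) (j := fun b _ => b - 1) ?_ ?_ ?_ ?_ ?_
    · intro b' hb'; rw [Finset.mem_range] at hb'; rw [Finset.mem_Icc]; omega
    · intro b hb; rw [Finset.mem_Icc] at hb; rw [Finset.mem_range]; omega
    · intro b' hb'; omega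
    · intro b hb; rw [Finset.mem_Icc] at hb; omega
    · intro b' hb'; rw [Nat.add_sub_cancel]; ring
  -- the general vector-of-values computation
  have hvalgen : ∀ (X : {v // v ∈ Fs.erase u} → (Fin n → Fin s) → F),
      (∀ v : {v // v ∈ Fs.erase u}, X v a =
        ∑ x : Fin s, nodePoly (s + h - 1) (c u) (Function.update a v.1 x) (μf v.1 (a v.1) x)) →
      ∀ p, valsOf lam Rs Fs u (n - k)
          (fun j => EMsg u (μf u) (s + h - 1) (c j.1)) X a p
        = ∑ b' : Fin (s + h - 1), ptOf pt tI Fs a p ^ (b' : ℕ) * c u ((b' : ℕ) + 1) a := by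
    intro X hX p
    cases p with
    | inl i =>
      rw [valsOf, ptOf]
      simp only [Sum.elim_inl]
      rw [hBeval i.1 i.isLt a, hreindex a (pt i.1)]
    | inr w =>
      rw [valsOf, ptOf]
      simp only [Sum.elim_inr]
      by_cases hwu : w.1 = u
      · rw [dif_pos hwu, hDw u hUnotR]
        show trueU _ c (μf u) Rs u a (Sum.inl (a u)) = _
        rw [trueU]
        simp only [Sum.elim_inl]
        rw [Function.update_eq_self, hμself u (a u), hwu, hreindex a _]
      · rw [dif_neg hwu]
        have hWF : w.1 ∈ Fs := w.2
        have hWnotR : w.1 ∉ Rs := Finset.disjoint_left.1 hdisj hWF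
        have hcorr : corrOf lam Rs u (n - k)
              (fun j => EMsg u (μf u) (s + h - 1) (c j.1)) w.1 a
            = ∑ x ∈ Finset.univ.erase (a w.1),
                nodePoly (s + h - 1) (c u) (Function.update a w.1 x) (μf w.1 (a w.1) x) := by
          rw [corrOf]
          refine Finset.sum_congr rfl fun x hx => ?_
          have hxne : x ≠ a w.1 := (Finset.mem_erase.1 hx).1
          rw [hBeval _ (rho_lt (a w.1) x hxne) (Function.update a w.1 x),
            hμoff w.1 (a w.1) x hxne]
        rw [hX ⟨w.1, Finset.mem_erase.2 ⟨hwu, w.2⟩⟩, hcorr]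
        rw [← Finset.add_sum_erase _ _ (Finset.mem_univ (a w.1)), add_sub_cancel_right]
        rw [Function.update_eq_self, hμself w.1 (a w.1), hreindex a _]
  -- injectivity of the final interpolation map
  have hptOfInj : Function.Injective (ptOf (s := s) pt tI Fs a) := by
    have hBnd : ∀ w : {w : Fin n // w ∈ Fs}, s - 1 + tI w.1 * s + ((a w.1 : ℕ)) < s - 1 + h * s := by
      intro w
      have hb1 : tI w.1 * s ≤ (h - 1) * s :=
        Nat.mul_le_mul_right s (by have := htIlt w.1 w.2; omega)
      have hb2 : (h - 1) * s + s = h * s := by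
        have hh1 : h - 1 + 1 = h := by omega
        calc (h - 1) * s + s = ((h - 1) + 1) * s := by ring
          _ = h * s := by rw [hh1]
      have := (a w.1).isLt
      omega
    have hmul : ∀ t1 t2 y1 y2 : ℕ, y1 < s → y2 < s → t1 * s + y1 = t2 * s + y2 → t1 = t2 := by
      intro t1 t2 y1 y2 h1 h2 he
      rcases lt_trichotomy t1 t2 with hlt | heq | hgt
      · exfalso
        have h3 : t1 * s + s ≤ t2 * s := by
          have h4 : (t1 + 1) * s ≤ t2 * s := Nat.mul_le_mul_right s hlt
          calc t1 * s + s = (t1 + 1) * s := by ring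
            _ ≤ t2 * s := h4
        omega
      · exact heq
      · exfalso
        have h3 : t2 * s + s ≤ t1 * s := by
          have h4 : (t2 + 1) * s ≤ t1 * s := Nat.mul_le_mul_right s hgt
          calc t2 * s + s = (t2 + 1) * s := by ring
            _ ≤ t1 * s := h4
        omega
    intro p q hpq
    cases p with
    | inl i =>
      cases q with
      | inl i' =>
        simp only [ptOf, Sum.elim_inl] at hpq
        exact congrArg Sum.inl (Fin.ext (hpt _ _ (by have := i.isLt; omega)
          (by have := i'.isLt; omega) hpq))
      | inr w' =>
        exfalso
        simp only [ptOf, Sum.elim_inl, Sum.elim_inr] at hpq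
        have := hpt _ _ (by have := i.isLt; omega) (hBnd w') hpq
        have := i.isLt
        omega
    | inr w =>
      cases q with
      | inl i' =>
        exfalso
        simp only [ptOf, Sum.elim_inl, Sum.elim_inr] at hpq
        have := hpt _ _ (hBnd w) (by have := i'.isLt; omega) hpq
        have := i'.isLt
        omega
      | inr w' =>
        simp only [ptOf, Sum.elim_inr] at hpq
        have h5 := hpt _ _ (hBnd w) (hBnd w') hpq
        have h6 : tI w.1 * s + ((a w.1 : ℕ)) = tI w'.1 * s + ((a w'.1 : ℕ)) := by omega
        have h7 := hmul _ _ _ _ (a w.1).isLt (a w'.1).isLt h6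
        exact congrArg Sum.inr (Subtype.ext (htIinj w.1 w.2 w'.1 w'.2 h7))
  have hevinj : Function.Injective
      (fun (co : Fin (s + h - 1) → F) (p : Fin (s - 1) ⊕ {w : Fin n // w ∈ Fs}) =>
        ∑ b' : Fin (s + h - 1), ptOf pt tI Fs a p ^ (b' : ℕ) * co b') := by
    refine evalmap_inj (ptOf pt tI Fs a) hptOfInj ?_
    rw [Fintype.card_sum, Fintype.card_fin, Fintype.card_coe, hFcard]
    omega
  -- conclusion
  beta_reduce
  rw [dif_pos hb]
  have hXside : ∀ v : {v // v ∈ Fs.erase u},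
      (if hx : u ∈ (Finset.univ \ Rs).erase v.1 then
        solveAt lam Rs v.1 (n - k)
          (fun j => EMsg v.1 (μf v.1) (s + h - 1) (c j.1)) a (Sum.inr ⟨u, hx⟩) else 0)
      = ∑ x : Fin s, nodePoly (s + h - 1) (c u) (Function.update a v.1 x) (μf v.1 (a v.1) x) := by
    intro v
    have hv := Finset.mem_erase.1 v.2
    have hVnotR : v.1 ∉ Rs := Finset.disjoint_left.1 hdisj hv.2
    have hxmem : u ∈ (Finset.univ \ Rs).erase v.1 :=
      Finset.mem_erase.2 ⟨fun h' => hv.1 h'.symm, Finset.mem_sdiff.2 ⟨Finset.mem_univ _, hUnotR⟩⟩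
    rw [dif_pos hxmem, hDw v.1 hVnotR]
    rw [trueU]
    simp only [Sum.elim_inr]
  have hcomp := funext (hvalgen
    (fun (v : {v // v ∈ Fs.erase u}) (a' : Fin n → Fin s) =>
      if hx : u ∈ (Finset.univ \ Rs).erase v.1 then
        solveAt lam Rs v.1 (n - k)
          (fun j => EMsg v.1 (μf v.1) (s + h - 1) (c j.1)) a' (Sum.inr ⟨u, hx⟩)
      else 0)
    (fun v => hXside v))
  rw [hcomp, Function.leftInverse_invFun hevinj]
  show c u (b - 1 + 1) a = c u b a
  rw [Nat.sub_add_cancel hbm.1]
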